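/- Conversely, if the matrix inequality D₀ᵀD₀ ⪯ I_{N−k} fails or the matrix inequality D₁ᵀD₁ ⪯ I_k fails, then there exists an admissible w ∈ C¹([0,1]; ℝ^N) such that ∫₀¹ (−Λ w′(x))ᵀ Λ̃ w(x) dx > 0; hence the dissipativity inequality ∫₀¹ (−Λ w′)ᵀ Λ̃ w ≤ 0 holds for all admissible C¹ functions if and only if both D₀ᵀD₀ ⪯ I_{N−k} and D₁ᵀD₁ ⪯ I_k. -/

import Mathlib

open MeasureTheory

/-- `(wp, wm)` (with derivatives `(wp', wm')`) is an admissible C¹ function on `[0,1]`: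
it is continuously differentiable and satisfies the boundary conditions
`w⁺(0) = D₀ w⁻(0)` and `w⁻(1) = D₁ w⁺(1)`. -/
def IsAdmissible (k l : ℕ) (D₀ : Matrix (Fin k) (Fin l) ℝ) (D₁ : Matrix (Fin l) (Fin k) ℝ)
    (wp wp' : ℝ → Fin k → ℝ) (wm wm' : ℝ → Fin l → ℝ) : Prop :=
  (∀ i, ∀ x ∈ Set.Icc (0:ℝ) 1,
    HasDerivWithinAt (fun t => wp t i) (wp' x i) (Set.Icc 0 1) x) ∧
  (∀ j, ∀ x ∈ Set.Icc (0:ℝ) 1,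
    HasDerivWithinAt (fun t => wm t j) (wm' x j) (Set.Icc 0 1) x) ∧
  (∀ i, ContinuousOn (fun t => wp' t i) (Set.Icc 0 1)) ∧
  (∀ j, ContinuousOn (fun t => wm' t j) (Set.Icc 0 1)) ∧
  wp 0 = D₀.mulVec (wm 0) ∧ wm 1 = D₁.mulVec (wp 1)

/-- The quantity `⟨Sw, w⟩_H = ∫₀¹ (−Λw′)ᵀ Λ̃ w`, where the first `k` components of `w`
are `wp` (speeds `lp i > 0`) and the last `l` components are `wm` (speeds `lm j < 0`). -/
noncomputable def transportForm (k l : ℕ) (lp : Fin k → ℝ) (lm : Fin l → ℝ)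
    (wp wp' : ℝ → Fin k → ℝ) (wm wm' : ℝ → Fin l → ℝ) : ℝ :=
  ∫ x in (0:ℝ)..1,
    ((∑ i, (-(lp i * wp' x i)) * ((1 / |lp i|) * wp x i)) +
      ∑ j, (-(lm j * wm' x j)) * ((1 / |lm j|) * wm x j))

open Matrix in
lemma ftc_sq (w w' : ℝ → ℝ)
    (hd : ∀ x ∈ Set.Icc (0:ℝ) 1, HasDerivWithinAt w (w' x) (Set.Icc 0 1) x)
    (hc : ContinuousOn w' (Set.Icc 0 1)) :
    ∫ x in (0:ℝ)..1, w' x * w x = (w 1 ^ 2 - w 0 ^ 2) / 2 := by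
  have hcw : ContinuousOn w (Set.Icc 0 1) := fun x hx => (hd x hx).continuousWithinAt
  have key : ∫ x in (0:ℝ)..1, w' x * w x
      = (fun t => w t ^ 2 / 2) 1 - (fun t => w t ^ 2 / 2) 0 := by
    apply intervalIntegral.integral_eq_sub_of_hasDeriv_right_of_le
      (f := fun t => w t ^ 2 / 2) (f' := fun x => w' x * w x) (by norm_num)
    · exact (hcw.pow 2).div_const 2
    · intro x hx
      have h1 : Set.Icc (0:ℝ) 1 ∈ nhds x := Icc_mem_nhds hx.1 hx.2
      have h0 := (hd x (Set.Ioo_subset_Icc_self hx)).hasDerivAt h1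
      have h2 : HasDerivAt (fun t => w t ^ 2 / 2) (w' x * w x) x := by
        exact ((h0.fun_pow 2).div_const 2).congr_deriv (by ring)
      exact h2.hasDerivWithinAt
    · apply ContinuousOn.intervalIntegrable
      rw [Set.uIcc_of_le (by norm_num : (0:ℝ) ≤ 1)]
      exact hc.mul hcw
  rw [key]; ring

/-- Value of the transport form for an admissible function: only boundary terms remain. -/
lemma transportForm_eq (k l : ℕ) (lp : Fin k → ℝ) (lm : Fin l → ℝ)
    (hlp : ∀ i, 0 < lp i) (hlm : ∀ j, lm j < 0)
    (D₀ : Matrix (Fin k) (Fin l) ℝ) (D₁ : Matrix (Fin l) (Fin k) ℝ)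
    (wp wp' : ℝ → Fin k → ℝ) (wm wm' : ℝ → Fin l → ℝ)
    (hadm : IsAdmissible k l D₀ D₁ wp wp' wm wm') :
    transportForm k l lp lm wp wp' wm wm' =
      (∑ i, (wp 0 i) ^ 2 - ∑ i, (wp 1 i) ^ 2) / 2 +
      (∑ j, (wm 1 j) ^ 2 - ∑ j, (wm 0 j) ^ 2) / 2 := by
  obtain ⟨hdp, hdm, hcp, hcm, _, _⟩ := hadm
  have hcwp : ∀ i, ContinuousOn (fun t => wp t i) (Set.Icc (0:ℝ) 1) :=
    fun i x hx => (hdp i x hx).continuousWithinAt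
  have hcwm : ∀ j, ContinuousOn (fun t => wm t j) (Set.Icc (0:ℝ) 1) :=
    fun j x hx => (hdm j x hx).continuousWithinAt
  have huIcc : Set.uIcc (0:ℝ) 1 = Set.Icc 0 1 := Set.uIcc_of_le (by norm_num)
  have hip : ∀ i : Fin k, IntervalIntegrable (fun x => -(wp' x i * wp x i)) volume 0 1 := by
    intro i
    apply ContinuousOn.intervalIntegrable
    rw [huIcc]
    exact ((hcp i).mul (hcwp i)).neg
  have him : ∀ j : Fin l, IntervalIntegrable (fun x => wm' x j * wm x j) volume 0 1 := by
    intro j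
    apply ContinuousOn.intervalIntegrable
    rw [huIcc]
    exact (hcm j).mul (hcwm j)
  have hipsum : IntervalIntegrable (fun x => ∑ i, -(wp' x i * wp x i)) volume 0 1 := by
    apply ContinuousOn.intervalIntegrable
    rw [huIcc]
    exact continuousOn_finset_sum _ fun i _ => ((hcp i).mul (hcwp i)).neg
  have himsum : IntervalIntegrable (fun x => ∑ j, wm' x j * wm x j) volume 0 1 := by
    apply ContinuousOn.intervalIntegrable
    rw [huIcc]
    exact continuousOn_finset_sum _ fun j _ => (hcm j).mul (hcwm j)
  have hpt : ∀ x : ℝ,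
      ((∑ i, (-(lp i * wp' x i)) * ((1 / |lp i|) * wp x i)) +
        ∑ j, (-(lm j * wm' x j)) * ((1 / |lm j|) * wm x j)) =
      (∑ i, -(wp' x i * wp x i)) + ∑ j, wm' x j * wm x j := by
    intro x
    congr 1
    · apply Finset.sum_congr rfl
      intro i _
      rw [abs_of_pos (hlp i)]
      have := (hlp i).ne'
      field_simp
    · apply Finset.sum_congr rfl
      intro j _
      rw [abs_of_neg (hlm j)]
      have := (hlm j).ne
      field_simp
  have h1 : transportForm k l lp lm wp wp' wm wm' =
      ∫ x in (0:ℝ)..1, ((∑ i, -(wp' x i * wp x i)) + ∑ j, wm' x j * wm x j) := by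
    unfold transportForm
    exact intervalIntegral.integral_congr (fun x _ => hpt x)
  rw [h1, intervalIntegral.integral_add hipsum himsum,
    intervalIntegral.integral_finset_sum (fun i _ => hip i),
    intervalIntegral.integral_finset_sum (fun j _ => him j)]
  have hp : ∀ i : Fin k, (∫ x in (0:ℝ)..1, -(wp' x i * wp x i))
      = -(((wp 1 i) ^ 2 - (wp 0 i) ^ 2) / 2) := by
    intro i
    rw [intervalIntegral.integral_neg, ftc_sq _ _ (hdp i) (hcp i)]
  have hm : ∀ j : Fin l, (∫ x in (0:ℝ)..1, wm' x j * wm x j)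
      = ((wm 1 j) ^ 2 - (wm 0 j) ^ 2) / 2 := fun j => ftc_sq _ _ (hdm j) (hcm j)
  rw [Finset.sum_congr rfl (fun i _ => hp i), Finset.sum_congr rfl (fun j _ => hm j)]
  simp only [sub_div, neg_sub, Finset.sum_sub_distrib, ← Finset.sum_div]

open Matrix in
lemma dot_helper {m n : ℕ} (D : Matrix (Fin m) (Fin n) ℝ) (v : Fin n → ℝ) :
    v ⬝ᵥ ((1 : Matrix (Fin n) (Fin n) ℝ) - D.transpose * D).mulVec v
      = ∑ j, v j ^ 2 - ∑ i, (D.mulVec v i) ^ 2 := by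
  rw [Matrix.sub_mulVec, dotProduct_sub, Matrix.one_mulVec,
    ← Matrix.mulVec_mulVec, Matrix.dotProduct_mulVec, Matrix.vecMul_transpose]
  simp [dotProduct, sq]

/-- Affine admissible witness for failure of `I - D₀ᵀD₀ ⪰ 0`. -/
lemma witness0 (k l : ℕ) (D₀ : Matrix (Fin k) (Fin l) ℝ) (D₁ : Matrix (Fin l) (Fin k) ℝ)
    (v : Fin l → ℝ) :
    IsAdmissible k l D₀ D₁ (fun x i => (1 - x) * D₀.mulVec v i)
      (fun _ i => -(D₀.mulVec v i)) (fun x j => (1 - x) * v j) (fun _ j => -(v j)) := by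
  refine ⟨?_, ?_, ?_, ?_, ?_, ?_⟩
  · intro i x _
    have h : HasDerivAt (fun t : ℝ => (1 - t) * D₀.mulVec v i) (-(D₀.mulVec v i)) x := by
      simpa using ((hasDerivAt_id x).const_sub 1).mul_const (D₀.mulVec v i)
    exact h.hasDerivWithinAt
  · intro j x _
    have h : HasDerivAt (fun t : ℝ => (1 - t) * v j) (-(v j)) x := by
      simpa using ((hasDerivAt_id x).const_sub 1).mul_const (v j)
    exact h.hasDerivWithinAt
  · exact fun i => continuousOn_const
  · exact fun j => continuousOn_const
  · funext i; simp
  · funext j; simp [Matrix.mulVec]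

/-- Affine admissible witness for failure of `I - D₁ᵀD₁ ⪰ 0`. -/
lemma witness1 (k l : ℕ) (D₀ : Matrix (Fin k) (Fin l) ℝ) (D₁ : Matrix (Fin l) (Fin k) ℝ)
    (u : Fin k → ℝ) :
    IsAdmissible k l D₀ D₁ (fun x i => x * u i)
      (fun _ i => u i) (fun x j => x * D₁.mulVec u j) (fun _ j => D₁.mulVec u j) := by
  refine ⟨?_, ?_, ?_, ?_, ?_, ?_⟩
  · intro i x _
    have h : HasDerivAt (fun t : ℝ => t * u i) (u i) x := by
      simpa using (hasDerivAt_id x).mul_const (u i)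
    exact h.hasDerivWithinAt
  · intro j x _
    have h : HasDerivAt (fun t : ℝ => t * D₁.mulVec u j) (D₁.mulVec u j) x := by
      simpa using (hasDerivAt_id x).mul_const (D₁.mulVec u j)
    exact h.hasDerivWithinAt
  · exact fun i => continuousOn_const
  · exact fun j => continuousOn_const
  · funext i; simp [Matrix.mulVec]
  · funext j; simp

open Matrix in
/-- If `D₀ᵀD₀ ⪯ I` fails or `D₁ᵀD₁ ⪯ I` fails, then some admissible C¹ function makes
`⟨Sw, w⟩_H > 0`; hence dissipativity on all admissible C¹ functions holds if and only if
both matrix inequalities hold. -/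
theorem statement7 (k l : ℕ) (lp : Fin k → ℝ) (lm : Fin l → ℝ)
    (hlp : ∀ i, 0 < lp i) (hlm : ∀ j, lm j < 0)
    (D₀ : Matrix (Fin k) (Fin l) ℝ) (D₁ : Matrix (Fin l) (Fin k) ℝ) :
    ((¬ ((1 : Matrix (Fin l) (Fin l) ℝ) - D₀.transpose * D₀).PosSemidef ∨
      ¬ ((1 : Matrix (Fin k) (Fin k) ℝ) - D₁.transpose * D₁).PosSemidef) →
      ∃ wp wp' wm wm', IsAdmissible k l D₀ D₁ wp wp' wm wm' ∧
        0 < transportForm k l lp lm wp wp' wm wm') ∧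
    ((∀ wp wp' wm wm', IsAdmissible k l D₀ D₁ wp wp' wm wm' →
        transportForm k l lp lm wp wp' wm wm' ≤ 0) ↔
      (((1 : Matrix (Fin l) (Fin l) ℝ) - D₀.transpose * D₀).PosSemidef ∧
        ((1 : Matrix (Fin k) (Fin k) ℝ) - D₁.transpose * D₁).PosSemidef)) := by
  have herm0 : ((1 : Matrix (Fin l) (Fin l) ℝ) - D₀.transpose * D₀).IsHermitian := by
    refine Matrix.isHermitian_one.sub ?_
    simpa using Matrix.isHermitian_conjTranspose_mul_self D₀
  have herm1 : ((1 : Matrix (Fin k) (Fin k) ℝ) - D₁.transpose * D₁).IsHermitian := by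
    refine Matrix.isHermitian_one.sub ?_
    simpa using Matrix.isHermitian_conjTranspose_mul_self D₁
  have main : (¬ ((1 : Matrix (Fin l) (Fin l) ℝ) - D₀.transpose * D₀).PosSemidef ∨
      ¬ ((1 : Matrix (Fin k) (Fin k) ℝ) - D₁.transpose * D₁).PosSemidef) →
      ∃ wp wp' wm wm', IsAdmissible k l D₀ D₁ wp wp' wm wm' ∧
        0 < transportForm k l lp lm wp wp' wm wm' := by
    rintro (h | h)
    · have hex : ∃ v : Fin l → ℝ,
          v ⬝ᵥ ((1 : Matrix (Fin l) (Fin l) ℝ) - D₀.transpose * D₀).mulVec v < 0 := by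
        by_contra hc
        push_neg at hc
        exact h (Matrix.PosSemidef.of_dotProduct_mulVec_nonneg herm0 fun v => by simpa using hc v)
      obtain ⟨v, hv⟩ := hex
      rw [dot_helper] at hv
      refine ⟨_, _, _, _, witness0 k l D₀ D₁ v, ?_⟩
      rw [transportForm_eq k l lp lm hlp hlm D₀ D₁ _ _ _ _ (witness0 k l D₀ D₁ v)]
      simp only [mul_pow]
      norm_num
      nlinarith [hv]
    · have hex : ∃ u : Fin k → ℝ,
          u ⬝ᵥ ((1 : Matrix (Fin k) (Fin k) ℝ) - D₁.transpose * D₁).mulVec u < 0 := by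
        by_contra hc
        push_neg at hc
        exact h (Matrix.PosSemidef.of_dotProduct_mulVec_nonneg herm1 fun u => by simpa using hc u)
      obtain ⟨u, hu⟩ := hex
      rw [dot_helper] at hu
      refine ⟨_, _, _, _, witness1 k l D₀ D₁ u, ?_⟩
      rw [transportForm_eq k l lp lm hlp hlm D₀ D₁ _ _ _ _ (witness1 k l D₀ D₁ u)]
      simp only [mul_pow]
      norm_num
      nlinarith [hu]
  refine ⟨main, ?_, ?_⟩
  · intro hall
    constructor
    · by_contra h
      obtain ⟨wp, wp', wm, wm', hadm, hpos⟩ := main (Or.inl h)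
      linarith [hall wp wp' wm wm' hadm]
    · by_contra h
      obtain ⟨wp, wp', wm, wm', hadm, hpos⟩ := main (Or.inr h)
      linarith [hall wp wp' wm wm' hadm]
  · rintro ⟨h0, h1⟩ wp wp' wm wm' hadm
    rw [transportForm_eq k l lp lm hlp hlm D₀ D₁ _ _ _ _ hadm]
    obtain ⟨_, _, _, _, hb0, hb1⟩ := hadm
    have q0 := h0.dotProduct_mulVec_nonneg (wm 0)
    have q1 := h1.dotProduct_mulVec_nonneg (wp 1)
    rw [show star (wm 0) = wm 0 from rfl] at q0
    rw [show star (wp 1) = wp 1 from rfl] at q1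
    rw [dot_helper] at q0 q1
    rw [hb0, hb1]
    linarith
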